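/- arXiv:0902.3045 — 6 statements merged into one kernel-verified Lean document; each statement's English description precedes it below -/
import Mathlib

section
/- Let A : X → Y be a finitely strictly singular bounded operator between Banach spaces, let ε > 0, and let D ⊆ X be a finite-dimensional subspace with dim D sufficiently large (depending on ε and j). Then for every j ≥ 1, if dim D > r + j + 1 for an appropriate r = r(ε, j), there exists a subspace R ⊆ D with dim R = j + 1 such that ‖Ax‖ ≤ ε‖x‖ for all x ∈ R. -/
open Module

/-- From finite strict singularity one can extract, inside any finite-dimensional subspace
of large enough dimension, a subspace of dimension `j + 1` on which `A` has norm at most `ε`. -/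
theorem stmt3 {X Y : Type*} [NormedAddCommGroup X] [NormedSpace ℝ X] [CompleteSpace X]
    [NormedAddCommGroup Y] [NormedSpace ℝ Y] [CompleteSpace Y] (A : X →L[ℝ] Y)
    (hA : ∀ ε > (0 : ℝ), ∃ n : ℕ, ∀ Z : Submodule ℝ X, (n : Cardinal) ≤ Module.rank ℝ Z →
      ∃ z ∈ Z, z ≠ 0 ∧ ‖A z‖ < ε * ‖z‖) :
    ∀ ε > (0 : ℝ), ∀ j : ℕ, 1 ≤ j → ∃ r : ℕ, ∀ D : Submodule ℝ X, FiniteDimensional ℝ D →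
      r + j + 1 < finrank ℝ D →
      ∃ R : Submodule ℝ X, R ≤ D ∧ finrank ℝ R = j + 1 ∧
        ∀ x ∈ R, ‖A x‖ ≤ ε * ‖x‖ := by
  intro ε hε j hj
  set δ : ℝ := ε / 2 ^ (j + 1) with hδdef
  have hδ : 0 < δ := by positivity
  obtain ⟨n, hn⟩ := hA δ hδ
  refine ⟨n, ?_⟩
  intro D hD hdim
  -- Main construction: a triangular biorthogonal system of length k
  have main : ∀ k, k ≤ j + 1 → ∃ (z : Fin k → X) (f : Fin k → (X →L[ℝ] ℝ)),
      (∀ t, z t ∈ D ∧ z t ≠ 0 ∧ ‖A (z t)‖ ≤ δ * ‖z t‖ ∧ ‖f t‖ = 1 ∧ f t (z t) = ‖z t‖) ∧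
      (∀ s t : Fin k, s < t → f s (z t) = 0) := by
    intro k
    induction k with
    | zero => exact fun _ => ⟨Fin.elim0, Fin.elim0, fun t => t.elim0, fun s => s.elim0⟩
    | succ k ih =>
      intro hk
      obtain ⟨z, f, h1, h2⟩ := ih (by omega)
      set g : D →ₗ[ℝ] (Fin k → ℝ) :=
        LinearMap.pi (fun s => ((f s).toLinearMap).comp D.subtype) with hg
      set K := LinearMap.ker g with hK
      set Z := Submodule.map D.subtype K with hZ
      have e1 : finrank ℝ (LinearMap.range g) + finrank ℝ K = finrank ℝ D :=
        LinearMap.finrank_range_add_finrank_ker g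
      have e2 : finrank ℝ (LinearMap.range g) ≤ k := by
        refine le_trans (Submodule.finrank_le _) ?_
        simp
      have e3 : finrank ℝ Z = finrank ℝ K := Submodule.finrank_map_subtype_eq D K
      haveI : FiniteDimensional ℝ Z := by
        rw [hZ]; infer_instance
      have hrank : (n : Cardinal) ≤ Module.rank ℝ Z := by
        rw [← finrank_eq_rank]
        exact_mod_cast by omega
      obtain ⟨w, hwZ, hw0, hwA⟩ := hn Z hrank
      have hwD : w ∈ D := by
        rcases hwZ with ⟨u, _, rfl⟩
        exact u.2
      have hwker : ∀ s : Fin k, f s w = 0 := by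
        intro s
        rcases hwZ with ⟨u, huK, rfl⟩
        have : g u = 0 := huK
        have := congrFun this s
        simpa [hg] using this
      obtain ⟨φ, hφ1, hφ2⟩ := exists_dual_vector ℝ w (norm_ne_zero_iff.mpr hw0)
      refine ⟨Fin.snoc z w, Fin.snoc f φ, ?_, ?_⟩
      · intro t
        rcases Fin.eq_castSucc_or_eq_last t with ⟨t', rfl⟩ | rfl
        · simpa [Fin.snoc_castSucc] using h1 t'
        · simp only [Fin.snoc_last]
          exact ⟨hwD, hw0, le_of_lt hwA, hφ1, hφ2⟩
      · intro s t hst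
        rcases Fin.eq_castSucc_or_eq_last t with ⟨t', rfl⟩ | rfl
        · have hs : s ≠ Fin.last k := by
            intro h; rw [h] at hst
            exact absurd (lt_of_le_of_lt (Fin.le_last _) hst) (lt_irrefl _)
          rcases Fin.eq_castSucc_or_eq_last s with ⟨s', rfl⟩ | rfl
          · simp only [Fin.snoc_castSucc]
            exact h2 s' t' (by simpa using hst)
          · exact absurd rfl hs
        · have hs : s ≠ Fin.last k := ne_of_lt hst
          rcases Fin.eq_castSucc_or_eq_last s with ⟨s', rfl⟩ | rfl
          · simp only [Fin.snoc_castSucc, Fin.snoc_last]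
            exact hwker s'
          · exact absurd rfl hs
  obtain ⟨z, f, h1, h2⟩ := main (j + 1) le_rfl
  -- Coefficient bound: triangular system gives control of coefficients
  have key : ∀ (a : Fin (j + 1) → ℝ) (t : Fin (j + 1)),
      |a t| * ‖z t‖ ≤ 2 ^ (t : ℕ) * ‖∑ s, a s • z s‖ := by
    intro a
    have H : ∀ m : ℕ, ∀ t : Fin (j + 1), (t : ℕ) = m →
        |a t| * ‖z t‖ ≤ 2 ^ (t : ℕ) * ‖∑ s, a s • z s‖ := by
      intro m
      induction m using Nat.strong_induction_on with
      | _ m ih =>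
        intro t ht
        set x := ∑ s, a s • z s with hx
        have hft : f t x = ∑ s, a s * f t (z s) := by
          rw [hx, map_sum]
          simp [smul_eq_mul]
        have hsplit : ∀ s : Fin (j + 1), a s * f t (z s) =
            (if s < t then a s * f t (z s) else 0) + (if s = t then a t * ‖z t‖ else 0) := by
          intro s
          rcases lt_trichotomy s t with h | h | h
          · simp [h, ne_of_lt h]
          · subst h; simp [(h1 s).2.2.2.2]
          · simp [not_lt_of_gt h, h2 t s h, (ne_of_gt h)]
        have hft2 : f t x =
            (∑ s ∈ Finset.univ.filter (fun s => s < t), a s * f t (z s)) + a t * ‖z t‖ := by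
          rw [hft, Finset.sum_congr rfl (fun s _ => hsplit s), Finset.sum_add_distrib,
            ← Finset.sum_filter]
          congr 1
          simp
        have hat : a t * ‖z t‖ =
            f t x - ∑ s ∈ Finset.univ.filter (fun s => s < t), a s * f t (z s) := by
          rw [hft2]; ring
        have hb1 : |f t x| ≤ ‖x‖ := by
          have := (f t).le_opNorm x
          rw [(h1 t).2.2.2.1] at this
          simpa [Real.norm_eq_abs] using this
        have hb2 : ∀ s ∈ Finset.univ.filter (fun s => s < t),
            |a s * f t (z s)| ≤ 2 ^ (s : ℕ) * ‖x‖ := by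
          intro s hs
          rw [Finset.mem_filter] at hs
          have hsm : (s : ℕ) < m := ht ▸ hs.2
          have hfz : |f t (z s)| ≤ ‖z s‖ := by
            have := (f t).le_opNorm (z s)
            rw [(h1 t).2.2.2.1] at this
            simpa [Real.norm_eq_abs] using this
          calc |a s * f t (z s)| = |a s| * |f t (z s)| := abs_mul _ _
            _ ≤ |a s| * ‖z s‖ := by
                exact mul_le_mul_of_nonneg_left hfz (abs_nonneg _)
            _ ≤ 2 ^ (s : ℕ) * ‖x‖ := ih (s : ℕ) hsm s rfl
        have hsum2 : ∑ s ∈ Finset.univ.filter (fun s : Fin (j + 1) => s < t),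
            (2 : ℝ) ^ (s : ℕ) = 2 ^ m - 1 := by
          have himg : (Finset.univ.filter (fun s : Fin (j + 1) => s < t)).image Fin.val
              = Finset.range m := by
            ext b
            simp only [Finset.mem_image, Finset.mem_filter, Finset.mem_univ, true_and,
              Finset.mem_range]
            constructor
            · rintro ⟨s, hs, rfl⟩
              rw [← ht]
              exact hs
            · intro hb
              have hbt : b < (t : ℕ) := ht ▸ hb
              exact ⟨⟨b, lt_trans hbt t.isLt⟩, by simpa [Fin.lt_def] using hbt, rfl⟩
          have hinj : ∀ s ∈ Finset.univ.filter (fun s : Fin (j + 1) => s < t),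
              ∀ s' ∈ Finset.univ.filter (fun s : Fin (j + 1) => s < t),
              (s : ℕ) = (s' : ℕ) → s = s' := fun s _ s' _ h => Fin.val_injective h
          calc ∑ s ∈ Finset.univ.filter (fun s : Fin (j + 1) => s < t), (2 : ℝ) ^ (s : ℕ)
              = ∑ b ∈ (Finset.univ.filter (fun s : Fin (j + 1) => s < t)).image Fin.val,
                (2 : ℝ) ^ b := (Finset.sum_image hinj).symm
            _ = ∑ b ∈ Finset.range m, (2 : ℝ) ^ b := by rw [himg]
            _ = 2 ^ m - 1 := by
                rw [geom_sum_eq (by norm_num : (2 : ℝ) ≠ 1)]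
                norm_num
        have hnx : (0:ℝ) ≤ ‖x‖ := norm_nonneg _
        calc |a t| * ‖z t‖ = |a t * ‖z t‖| := by
              rw [abs_mul, abs_of_nonneg (norm_nonneg _)]
          _ = |f t x - ∑ s ∈ Finset.univ.filter (fun s => s < t), a s * f t (z s)| := by
              rw [hat]
          _ ≤ |f t x| + |∑ s ∈ Finset.univ.filter (fun s => s < t), a s * f t (z s)| :=
              abs_sub _ _
          _ ≤ ‖x‖ + ∑ s ∈ Finset.univ.filter (fun s => s < t), |a s * f t (z s)| :=
              add_le_add hb1 (Finset.abs_sum_le_sum_abs _ _)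
          _ ≤ ‖x‖ + ∑ s ∈ Finset.univ.filter (fun s => s < t), 2 ^ (s : ℕ) * ‖x‖ :=
              add_le_add le_rfl (Finset.sum_le_sum hb2)
          _ = ‖x‖ + (2 ^ m - 1) * ‖x‖ := by rw [← Finset.sum_mul, hsum2]
          _ = 2 ^ m * ‖x‖ := by ring
          _ = 2 ^ (t : ℕ) * ‖x‖ := by rw [ht]
    exact fun t => H (t : ℕ) t rfl
  -- linear independence
  have hindep : LinearIndependent ℝ z := by
    rw [Fintype.linearIndependent_iff]
    intro a ha t
    have h := key a t
    rw [ha] at h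
    simp only [norm_zero, mul_zero] at h
    have hz : 0 < ‖z t‖ := norm_pos_iff.mpr (h1 t).2.1
    have habs : |a t| ≤ 0 := by nlinarith [abs_nonneg (a t)]
    exact abs_eq_zero.mp (le_antisymm habs (abs_nonneg _))
  refine ⟨Submodule.span ℝ (Set.range z), ?_, ?_, ?_⟩
  · rw [Submodule.span_le]
    rintro _ ⟨t, rfl⟩
    exact (h1 t).1
  · rw [finrank_span_eq_card hindep, Fintype.card_fin]
  · intro x hx
    obtain ⟨a, rfl⟩ := (Submodule.mem_span_range_iff_exists_fun ℝ).mp hx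
    set x := ∑ s, a s • z s with hxdef
    have hAx : ‖A x‖ ≤ ∑ t, |a t| * ‖A (z t)‖ := by
      calc ‖A x‖ = ‖∑ t, a t • A (z t)‖ := by
            rw [hxdef, map_sum]; simp
        _ ≤ ∑ t, ‖a t • A (z t)‖ := norm_sum_le _ _
        _ = ∑ t, |a t| * ‖A (z t)‖ := by simp [norm_smul, Real.norm_eq_abs]
    have hstep : ∀ t : Fin (j + 1), |a t| * ‖A (z t)‖ ≤ δ * (2 ^ (t : ℕ) * ‖x‖) := by
      intro t
      calc |a t| * ‖A (z t)‖ ≤ |a t| * (δ * ‖z t‖) :=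
            mul_le_mul_of_nonneg_left (h1 t).2.2.1 (abs_nonneg _)
        _ = δ * (|a t| * ‖z t‖) := by ring
        _ ≤ δ * (2 ^ (t : ℕ) * ‖x‖) :=
            mul_le_mul_of_nonneg_left (key a t) (le_of_lt hδ)
    have hgeom : ∑ t : Fin (j + 1), (2 : ℝ) ^ (t : ℕ) = 2 ^ (j + 1) - 1 := by
      rw [Fin.sum_univ_eq_sum_range (fun m => (2 : ℝ) ^ m) (j + 1),
        geom_sum_eq (by norm_num : (2 : ℝ) ≠ 1)]
      norm_num
    have hnx : (0:ℝ) ≤ ‖x‖ := norm_nonneg _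
    calc ‖A x‖ ≤ ∑ t, |a t| * ‖A (z t)‖ := hAx
      _ ≤ ∑ t : Fin (j + 1), δ * (2 ^ (t : ℕ) * ‖x‖) := Finset.sum_le_sum fun t _ => hstep t
      _ = δ * ((2 ^ (j + 1) - 1) * ‖x‖) := by
          rw [← Finset.mul_sum, ← Finset.sum_mul, hgeom]
      _ ≤ ε * ‖x‖ := by
          have h2p : (0:ℝ) < 2 ^ (j + 1) := by positivity
          rw [hδdef]
          rw [div_mul_eq_mul_div, div_le_iff₀ h2p]
          nlinarith
end

section
/- Let (M_n) and (N_n) be sequences of closed subspaces of a Banach space X with δ(M_n, N_n) → 0 and dim M_n → ∞. Then there exist a subsequence and, for each n in it, subspaces H_n ⊆ M_n and G_n ⊆ N_n with dim H_n = dim G_n, dim H_n → ∞, and both δ(H_n, G_n) → 0 and δ(G_n, H_n) → 0. -/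
open Filter Module

/-- The gap `δ(M, P) = sup { dist(x, P) : x ∈ M, ‖x‖ = 1 }` between subspaces. -/
noncomputable def subspaceGap {X : Type*} [NormedAddCommGroup X] [NormedSpace ℝ X]
    (M P : Submodule ℝ X) : ℝ :=
  sSup {d : ℝ | ∃ x ∈ M, ‖x‖ = 1 ∧ d = Metric.infDist x (P : Set X)}

section Aux

variable {X : Type*} [NormedAddCommGroup X] [NormedSpace ℝ X]

lemma subspaceGap_nonneg (M P : Submodule ℝ X) : 0 ≤ subspaceGap M P := by
  apply Real.sSup_nonneg
  rintro d ⟨x, hx, hx1, rfl⟩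
  exact Metric.infDist_nonneg

lemma infDist_le_subspaceGap {M P : Submodule ℝ X} {x : X} (hx : x ∈ M) (hx1 : ‖x‖ = 1) :
    Metric.infDist x (P : Set X) ≤ subspaceGap M P := by
  apply le_csSup
  · refine ⟨1, ?_⟩
    rintro d ⟨y, hy, hy1, rfl⟩
    calc Metric.infDist y (P : Set X) ≤ dist y 0 := Metric.infDist_le_dist_of_mem P.zero_mem
    _ = 1 := by rw [dist_zero_right, hy1]
  · exact ⟨x, hx, hx1, rfl⟩

lemma subspaceGap_le {M P : Submodule ℝ X} {c : ℝ} (hc : 0 ≤ c)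
    (h : ∀ x ∈ M, ‖x‖ = 1 → Metric.infDist x (P : Set X) ≤ c) : subspaceGap M P ≤ c := by
  apply Real.sSup_le _ hc
  rintro d ⟨x, hx, hx1, rfl⟩
  exact h x hx hx1

/-- Triangular biorthogonal system in any subspace of rank ≥ k. -/
lemma exists_biortho : ∀ (k : ℕ) (M : Submodule ℝ X), (k : Cardinal) ≤ Module.rank ℝ M →
    ∃ (e : Fin k → X) (f : Fin k → X →L[ℝ] ℝ),
      (∀ i, e i ∈ M) ∧ (∀ i, ‖e i‖ = 1) ∧ (∀ i, ‖f i‖ ≤ 1) ∧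
      (∀ i, f i (e i) = 1) ∧ (∀ i j, j < i → f j (e i) = 0) := by
  intro k
  induction k with
  | zero =>
    intro M _
    exact ⟨finZeroElim, finZeroElim, fun i => i.elim0, fun i => i.elim0, fun i => i.elim0,
      fun i => i.elim0, fun i => i.elim0⟩
  | succ k ih =>
    intro M hk
    obtain ⟨e, f, heM, he1, hf1, hfe, hlt⟩ := ih M (le_trans (by exact_mod_cast Nat.le_succ k) hk)
    let L : ↥M →ₗ[ℝ] (Fin k → ℝ) :=
      { toFun := fun x j => f j (x : X)
        map_add' := by intro a b; funext j; simp
        map_smul' := by intro c a; funext j; simp }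
    have hker : LinearMap.ker L ≠ ⊥ := by
      intro h
      have hinj : Function.Injective L := LinearMap.ker_eq_bot.1 h
      have h1 := LinearMap.lift_rank_le_of_injective L hinj
      rw [rank_fin_fun] at h1
      simp only [Cardinal.lift_natCast, Cardinal.lift_uzero] at h1
      have h2 := le_trans hk h1
      rw [Nat.cast_le] at h2
      omega
    obtain ⟨x, hxker, hx0⟩ := (Submodule.ne_bot_iff _).1 hker
    have hy0 : (x : X) ≠ 0 := fun h => hx0 (Subtype.ext h)
    set y : X := ‖(x : X)‖⁻¹ • (x : X) with hy
    have hy1 : ‖y‖ = 1 := norm_smul_inv_norm hy0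
    have hyM : y ∈ M := M.smul_mem _ x.2
    have hfy : ∀ j : Fin k, f j y = 0 := by
      intro j
      have hLx : L x = 0 := LinearMap.mem_ker.1 hxker
      have hj : f j (x : X) = 0 := by
        have := congrFun hLx j
        exact this
      rw [hy, map_smul, hj, smul_zero]
    obtain ⟨g, hg1, hgy⟩ := exists_dual_vector ℝ y (by rw [← norm_ne_zero_iff, hy1]; norm_num)
    rw [hy1] at hgy
    refine ⟨Fin.snoc e y, Fin.snoc f g, ?_, ?_, ?_, ?_, ?_⟩
    · intro i
      induction i using Fin.lastCases with
      | last => simpa using hyM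
      | cast i => simpa using heM i
    · intro i
      induction i using Fin.lastCases with
      | last => simpa using hy1
      | cast i => simpa using he1 i
    · intro i
      induction i using Fin.lastCases with
      | last => simp [hg1]
      | cast i => simpa using hf1 i
    · intro i
      induction i using Fin.lastCases with
      | last => simpa using hgy
      | cast i => simpa using hfe i
    · intro i j hji
      induction i using Fin.lastCases with
      | last =>
        induction j using Fin.lastCases with
        | last => exact absurd hji (lt_irrefl _)
        | cast j => simpa using hfy j
      | cast i =>
        induction j using Fin.lastCases with
        | last => exact absurd hji (not_lt.2 (Fin.le_last _))
        | cast j =>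
          have : j < i := by
            rwa [Fin.castSucc_lt_castSucc_iff] at hji
          simpa using hlt i j this

/-- Coordinate-sum bound for a triangular biorthogonal system. -/
lemma coord_sum_bound {k : ℕ} {e : Fin k → X} {f : Fin k → X →L[ℝ] ℝ}
    (he1 : ∀ i, ‖e i‖ ≤ 1) (hf1 : ∀ i, ‖f i‖ ≤ 1) (hfe : ∀ i, f i (e i) = 1)
    (hlt : ∀ i j, j < i → f j (e i) = 0) (a : Fin k → ℝ) :
    ∑ i, |a i| ≤ 2 ^ k * ‖∑ i, a i • e i‖ := by
  set x := ∑ i, a i • e i with hx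
  have hxn : (0 : ℝ) ≤ ‖x‖ := norm_nonneg _
  have hstep : ∀ j : Fin k,
      |a j| ≤ ‖x‖ + ∑ i ∈ Finset.univ.filter (fun i : Fin k => (i : ℕ) < (j : ℕ)), |a i| := by
    intro j
    have hfx : (f j) x = ∑ i, a i * (f j) (e i) := by
      rw [hx, map_sum]
      simp [smul_eq_mul]
    have hsplit : ∑ i, a i * (f j) (e i)
        = (∑ i ∈ Finset.univ.filter (fun i : Fin k => (i : ℕ) < (j : ℕ)), a i * (f j) (e i))
          + ∑ i ∈ Finset.univ.filter (fun i : Fin k => ¬ (i : ℕ) < (j : ℕ)), a i * (f j) (e i) :=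
      (Finset.sum_filter_add_sum_filter_not _ _ _).symm
    have hsec : ∑ i ∈ Finset.univ.filter (fun i : Fin k => ¬ (i : ℕ) < (j : ℕ)),
        a i * (f j) (e i) = a j := by
      rw [Finset.sum_eq_single j]
      · rw [hfe j, mul_one]
      · intro i hi hij
        have hji : j < i := by
          simp only [Finset.mem_filter, not_lt] at hi
          have hne : (i : ℕ) ≠ (j : ℕ) := fun h => hij (Fin.ext h)
          rw [Fin.lt_def]
          omega
        rw [hlt i j hji, mul_zero]
      · intro hj
        apply absurd _ hj
        simp
    have haj : a j = (f j) x
        - ∑ i ∈ Finset.univ.filter (fun i : Fin k => (i : ℕ) < (j : ℕ)), a i * (f j) (e i) := by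
      rw [hfx, hsplit, hsec]; ring
    have h1 : |(f j) x| ≤ ‖x‖ := by
      calc |(f j) x| = ‖(f j) x‖ := (Real.norm_eq_abs _).symm
      _ ≤ ‖f j‖ * ‖x‖ := (f j).le_opNorm x
      _ ≤ 1 * ‖x‖ := mul_le_mul_of_nonneg_right (hf1 j) hxn
      _ = ‖x‖ := one_mul _
    have h2 : |∑ i ∈ Finset.univ.filter (fun i : Fin k => (i : ℕ) < (j : ℕ)), a i * (f j) (e i)|
        ≤ ∑ i ∈ Finset.univ.filter (fun i : Fin k => (i : ℕ) < (j : ℕ)), |a i| := by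
      refine le_trans (Finset.abs_sum_le_sum_abs _ _) (Finset.sum_le_sum ?_)
      intro i _
      rw [abs_mul]
      have : |(f j) (e i)| ≤ 1 := by
        calc |(f j) (e i)| = ‖(f j) (e i)‖ := (Real.norm_eq_abs _).symm
        _ ≤ ‖f j‖ * ‖e i‖ := (f j).le_opNorm _
        _ ≤ 1 * 1 := mul_le_mul (hf1 j) (he1 i) (norm_nonneg _) zero_le_one
        _ = 1 := one_mul 1
      calc |a i| * |(f j) (e i)| ≤ |a i| * 1 := mul_le_mul_of_nonneg_left this (abs_nonneg _)
      _ = |a i| := mul_one _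
    calc |a j| = |(f j) x - ∑ i ∈ Finset.univ.filter (fun i : Fin k => (i : ℕ) < (j : ℕ)),
        a i * (f j) (e i)| := by rw [← haj]
    _ ≤ |(f j) x| + |∑ i ∈ Finset.univ.filter (fun i : Fin k => (i : ℕ) < (j : ℕ)),
        a i * (f j) (e i)| := abs_sub _ _
    _ ≤ ‖x‖ + ∑ i ∈ Finset.univ.filter (fun i : Fin k => (i : ℕ) < (j : ℕ)), |a i| :=
        add_le_add h1 h2
  have hT : ∀ j : ℕ,
      ∑ i ∈ Finset.univ.filter (fun i : Fin k => (i : ℕ) < j), |a i| ≤ (2 ^ j - 1) * ‖x‖ := by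
    intro j
    induction j with
    | zero => simp
    | succ j ihj =>
      have hmono : (1 : ℝ) ≤ 2 ^ j := one_le_pow₀ (by norm_num)
      by_cases hj : j < k
      · have hset : Finset.univ.filter (fun i : Fin k => (i : ℕ) < j + 1)
            = insert (⟨j, hj⟩ : Fin k) (Finset.univ.filter (fun i : Fin k => (i : ℕ) < j)) := by
          ext i
          simp only [Finset.mem_filter, Finset.mem_univ, true_and, Finset.mem_insert, Fin.ext_iff]
          omega
        rw [hset, Finset.sum_insert (by simp)]
        have h1 := hstep ⟨j, hj⟩
        simp only at h1
        have h1' : |a ⟨j, hj⟩|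
            ≤ ‖x‖ + ∑ i ∈ Finset.univ.filter (fun i : Fin k => (i : ℕ) < j), |a i| := h1
        have : (2 : ℝ) ^ (j + 1) = 2 * 2 ^ j := by ring
        rw [this]
        nlinarith [ihj, h1', hxn]
      · have hset : Finset.univ.filter (fun i : Fin k => (i : ℕ) < j + 1)
            = Finset.univ.filter (fun i : Fin k => (i : ℕ) < j) := by
          ext i
          simp only [Finset.mem_filter, Finset.mem_univ, true_and]
          have := i.isLt
          omega
        rw [hset]
        have : (2 : ℝ) ^ (j + 1) = 2 * 2 ^ j := by ring
        rw [this]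
        nlinarith [ihj, hxn]
  have huniv : Finset.univ.filter (fun i : Fin k => (i : ℕ) < k) = Finset.univ := by
    ext i
    simp [i.isLt]
  have h := hT k
  rw [huniv] at h
  have hpow : (0 : ℝ) ≤ 2 ^ k := by positivity
  nlinarith [h, hxn]

/-- The core per-index construction. -/
lemma key_construction (n : ℕ) (M N : Submodule ℝ X)
    (hrk : (n : Cardinal) ≤ Module.rank ℝ M) {δ : ℝ} (hδpos : 0 < δ)
    (hδ : subspaceGap M N < δ) (hη : 2 ^ n * δ ≤ 1 / 2) :
    ∃ H G : Submodule ℝ X, H ≤ M ∧ G ≤ N ∧ FiniteDimensional ℝ H ∧ FiniteDimensional ℝ G ∧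
      finrank ℝ H = n ∧ finrank ℝ G = n ∧
      subspaceGap H G ≤ 2 ^ n * δ ∧ subspaceGap G H ≤ 2 * (2 ^ n * δ) := by
  obtain ⟨e, f, heM, he1, hf1, hfe, hlt⟩ := exists_biortho n M hrk
  have he1' : ∀ i, ‖e i‖ ≤ 1 := fun i => le_of_eq (he1 i)
  have hpow : (0 : ℝ) < 2 ^ n := by positivity
  -- choose nearby vectors in N
  have hgsel : ∀ i : Fin n, ∃ g ∈ N, ‖e i - g‖ < δ := by
    intro i
    have h1 : Metric.infDist (e i) (N : Set X) < δ :=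
      lt_of_le_of_lt (infDist_le_subspaceGap (heM i) (he1 i)) hδ
    obtain ⟨y, hy, hdy⟩ := (Metric.infDist_lt_iff ⟨0, N.zero_mem⟩).1 h1
    exact ⟨y, hy, by rwa [dist_eq_norm] at hdy⟩
  choose g hgN hge using hgsel
  have hdiff : ∀ b : Fin n → ℝ,
      ‖(∑ i, b i • e i) - ∑ i, b i • g i‖ ≤ δ * ∑ i, |b i| := by
    intro b
    have heq : (∑ i, b i • e i) - ∑ i, b i • g i = ∑ i, b i • (e i - g i) := by
      rw [← Finset.sum_sub_distrib]
      simp [smul_sub]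
    rw [heq]
    calc ‖∑ i, b i • (e i - g i)‖ ≤ ∑ i, ‖b i • (e i - g i)‖ := norm_sum_le _ _
    _ = ∑ i, |b i| * ‖e i - g i‖ := by simp [norm_smul]
    _ ≤ ∑ i, |b i| * δ :=
        Finset.sum_le_sum fun i _ => mul_le_mul_of_nonneg_left (le_of_lt (hge i)) (abs_nonneg _)
    _ = δ * ∑ i, |b i| := by rw [← Finset.sum_mul]; ring
  -- coefficients vanish when combination of e's is zero
  have hzero : ∀ c : Fin n → ℝ, ∑ i, c i • e i = 0 → ∀ i, c i = 0 := by
    intro c hc i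
    have hb := coord_sum_bound he1' hf1 hfe hlt c
    rw [hc, norm_zero, mul_zero] at hb
    have h0 : ∑ i, |c i| = 0 :=
      le_antisymm hb (Finset.sum_nonneg fun i _ => abs_nonneg _)
    exact abs_eq_zero.1
      ((Finset.sum_eq_zero_iff_of_nonneg (fun i _ => abs_nonneg _)).1 h0 i (Finset.mem_univ i))
  have heind : LinearIndependent ℝ e := Fintype.linearIndependent_iff.2 hzero
  have hgind : LinearIndependent ℝ g := by
    refine Fintype.linearIndependent_iff.2 fun c hc => ?_
    have hb := coord_sum_bound he1' hf1 hfe hlt c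
    set x := ∑ i, c i • e i with hxdef
    have hxg : ‖x - ∑ i, c i • g i‖ ≤ δ * ∑ i, |c i| := hdiff c
    rw [hc, sub_zero] at hxg
    have hx0 : x = 0 := by
      have h1 : ‖x‖ ≤ δ * (2 ^ n * ‖x‖) := le_trans hxg (by nlinarith [hb, hδpos.le])
      have h2 : δ * (2 ^ n * ‖x‖) ≤ (1 / 2) * ‖x‖ := by nlinarith [norm_nonneg x]
      have : ‖x‖ = 0 := le_antisymm (by linarith) (norm_nonneg x)
      exact norm_eq_zero.1 this
    exact hzero c hx0
  refine ⟨Submodule.span ℝ (Set.range e), Submodule.span ℝ (Set.range g),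
    Submodule.span_le.2 (Set.range_subset_iff.2 heM),
    Submodule.span_le.2 (Set.range_subset_iff.2 hgN),
    FiniteDimensional.span_of_finite _ (Set.finite_range e),
    FiniteDimensional.span_of_finite _ (Set.finite_range g), ?_, ?_, ?_, ?_⟩
  · rw [finrank_span_eq_card heind, Fintype.card_fin]
  · rw [finrank_span_eq_card hgind, Fintype.card_fin]
  · -- gap H G
    refine subspaceGap_le (by positivity) ?_
    intro x hx hx1
    obtain ⟨c, hc⟩ := (Submodule.mem_span_range_iff_exists_fun ℝ).1 hx
    have hcb : ∑ i, |c i| ≤ 2 ^ n := by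
      have := coord_sum_bound he1' hf1 hfe hlt c
      rw [hc, hx1, mul_one] at this
      exact this
    have hmem : (∑ i, c i • g i) ∈ Submodule.span ℝ (Set.range g) :=
      Submodule.sum_mem _ fun i _ =>
        Submodule.smul_mem _ _ (Submodule.subset_span ⟨i, rfl⟩)
    calc Metric.infDist x (Submodule.span ℝ (Set.range g) : Set X)
        ≤ dist x (∑ i, c i • g i) := Metric.infDist_le_dist_of_mem hmem
    _ = ‖(∑ i, c i • e i) - ∑ i, c i • g i‖ := by rw [dist_eq_norm, hc]
    _ ≤ δ * ∑ i, |c i| := hdiff c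
    _ ≤ 2 ^ n * δ := by nlinarith [hδpos.le]
  · -- gap G H
    refine subspaceGap_le (by positivity) ?_
    intro y hy hy1
    obtain ⟨b, hb⟩ := (Submodule.mem_span_range_iff_exists_fun ℝ).1 hy
    set x := ∑ i, b i • e i with hxdef
    have hbb : ∑ i, |b i| ≤ 2 ^ n * ‖x‖ := coord_sum_bound he1' hf1 hfe hlt b
    have hxy : ‖x - y‖ ≤ δ * (2 ^ n * ‖x‖) := by
      calc ‖x - y‖ = ‖(∑ i, b i • e i) - ∑ i, b i • g i‖ := by rw [hxdef, hb]
      _ ≤ δ * ∑ i, |b i| := hdiff b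
      _ ≤ δ * (2 ^ n * ‖x‖) := mul_le_mul_of_nonneg_left hbb hδpos.le
    have hxle : ‖x‖ ≤ 2 := by
      have h1 : ‖x‖ ≤ ‖y‖ + ‖x - y‖ := norm_le_norm_add_norm_sub' x y
      rw [hy1] at h1
      nlinarith [norm_nonneg x]
    have hmem : x ∈ Submodule.span ℝ (Set.range e) :=
      Submodule.sum_mem _ fun i _ =>
        Submodule.smul_mem _ _ (Submodule.subset_span ⟨i, rfl⟩)
    calc Metric.infDist y (Submodule.span ℝ (Set.range e) : Set X)
        ≤ dist y x := Metric.infDist_le_dist_of_mem hmem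
    _ = ‖x - y‖ := by rw [dist_eq_norm, norm_sub_rev]
    _ ≤ δ * (2 ^ n * ‖x‖) := hxy
    _ ≤ 2 * (2 ^ n * δ) := by
        have h2 := mul_le_mul_of_nonneg_left hxle (by positivity : (0:ℝ) ≤ δ * 2 ^ n)
        nlinarith [h2]

end Aux

/-- If `δ(M_n, N_n) → 0` and `dim M_n → ∞`, then along a subsequence there are
equal (finite) dimensional subspaces `H_n ⊆ M_n`, `G_n ⊆ N_n` with dimensions tending
to infinity and gaps in both directions tending to `0`. -/
theorem stmt7 {X : Type*} [NormedAddCommGroup X] [NormedSpace ℝ X] [CompleteSpace X]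
    (M N : ℕ → Submodule ℝ X)
    (hMc : ∀ n, IsClosed ((M n : Set X))) (hNc : ∀ n, IsClosed ((N n : Set X)))
    (hgap : Tendsto (fun n => subspaceGap (M n) (N n)) atTop (nhds 0))
    (hdim : ∀ k : ℕ, ∃ n₀ : ℕ, ∀ n ≥ n₀, (k : Cardinal) ≤ Module.rank ℝ (M n)) :
    ∃ φ : ℕ → ℕ, StrictMono φ ∧ ∃ H G : ℕ → Submodule ℝ X,
      (∀ n, H n ≤ M (φ n) ∧ G n ≤ N (φ n) ∧ FiniteDimensional ℝ (H n) ∧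
        FiniteDimensional ℝ (G n) ∧ finrank ℝ (H n) = finrank ℝ (G n)) ∧
      Tendsto (fun n => finrank ℝ (H n)) atTop atTop ∧
      Tendsto (fun n => subspaceGap (H n) (G n)) atTop (nhds 0) ∧
      Tendsto (fun n => subspaceGap (G n) (H n)) atTop (nhds 0) := by
  set δf : ℕ → ℝ := fun n => (4 : ℝ)⁻¹ ^ n / 2 with hδf
  have hδpos : ∀ n, 0 < δf n := fun n => by positivity
  have hηeq : ∀ n, 2 ^ n * δf n = (2 : ℝ)⁻¹ ^ n / 2 := by
    intro n
    have : (2 : ℝ) ^ n * (4 : ℝ)⁻¹ ^ n = (2 : ℝ)⁻¹ ^ n := by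
      rw [← mul_pow]; norm_num
    simp only [hδf]
    rw [mul_div_assoc', this]
  have hηle : ∀ n, 2 ^ n * δf n ≤ 1 / 2 := by
    intro n
    rw [hηeq n]
    have h1 : (2 : ℝ)⁻¹ ^ n ≤ 1 := pow_le_one₀ (by norm_num) (by norm_num)
    linarith
  have hP : ∀ n : ℕ, ∀ᶠ m in atTop,
      ((n : Cardinal) ≤ Module.rank ℝ (M m) ∧ subspaceGap (M m) (N m) < δf n) := by
    intro n
    refine (eventually_atTop.2 (hdim n)).and ?_
    exact hgap.eventually_lt_const (hδpos n)
  obtain ⟨φ, hφ, hPφ⟩ := Filter.extraction_forall_of_eventually hP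
  have hkey : ∀ n : ℕ, ∃ H G : Submodule ℝ X,
      H ≤ M (φ n) ∧ G ≤ N (φ n) ∧ FiniteDimensional ℝ H ∧ FiniteDimensional ℝ G ∧
      finrank ℝ H = n ∧ finrank ℝ G = n ∧
      subspaceGap H G ≤ 2 ^ n * δf n ∧ subspaceGap G H ≤ 2 * (2 ^ n * δf n) := fun n =>
    key_construction n (M (φ n)) (N (φ n)) (hPφ n).1 (hδpos n) (hPφ n).2 (hηle n)
  choose H G hHM hGN hHfd hGfd hHr hGr hg1 hg2 using hkey
  refine ⟨φ, hφ, H, G, fun n => ⟨hHM n, hGN n, hHfd n, hGfd n, by rw [hHr n, hGr n]⟩, ?_, ?_, ?_⟩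
  · have : (fun n => finrank ℝ (H n)) = fun n => n := funext hHr
    rw [this]
    exact tendsto_id
  · refine squeeze_zero (fun n => subspaceGap_nonneg _ _) (fun n => ?_)
      (tendsto_pow_atTop_nhds_zero_of_lt_one (r := (2 : ℝ)⁻¹) (by norm_num) (by norm_num))
    refine le_trans (hg1 n) ?_
    rw [hηeq n]
    have : (0 : ℝ) ≤ (2 : ℝ)⁻¹ ^ n := by positivity
    linarith
  · refine squeeze_zero (fun n => subspaceGap_nonneg _ _) (fun n => ?_)
      (tendsto_pow_atTop_nhds_zero_of_lt_one (r := (2 : ℝ)⁻¹) (by norm_num) (by norm_num))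
    refine le_trans (hg2 n) ?_
    rw [hηeq n]
    linarith
end

section
/- Let M, N be closed subspaces of a Banach space X such that M ∩ N = {0}, M + N is not closed, and let M_k ⊆ M be a closed subspace of finite codimension in M. Then M_k + N is not closed. -/
/-- A closed subspace plus a finite-dimensional subspace is closed. -/
lemma aux_sup_closed {X : Type*} [NormedAddCommGroup X] [NormedSpace ℝ X]
    (S F : Submodule ℝ X) (hS : IsClosed (S : Set X)) (hF : FiniteDimensional ℝ F) :
    IsClosed ((S ⊔ F : Submodule ℝ X) : Set X) := by
  haveI : IsClosed (S : Set X) := hS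
  haveI : FiniteDimensional ℝ F := hF
  have hfd : FiniteDimensional ℝ (F.map S.mkQ) := Module.Finite.map F S.mkQ
  have hclosed : IsClosed ((F.map S.mkQ : Submodule ℝ (X ⧸ S)) : Set (X ⧸ S)) :=
    Submodule.closed_of_finiteDimensional _
  have heq : (S ⊔ F : Submodule ℝ X) = (F.map S.mkQ).comap S.mkQ := by
    rw [Submodule.comap_map_eq, Submodule.ker_mkQ, sup_comm]
  rw [heq]
  exact hclosed.preimage continuous_quot_mk

/-- If `M ∩ N = {0}`, `M + N` is not closed, and `M_k ⊆ M` is a closed subspace of finite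
codimension in `M`, then `M_k + N` is not closed. -/
theorem stmt10 {X : Type*} [NormedAddCommGroup X] [NormedSpace ℝ X] [CompleteSpace X]
    (M N Mk : Submodule ℝ X) (hM : IsClosed (M : Set X)) (hN : IsClosed (N : Set X))
    (hMN : M ⊓ N = ⊥) (hsum : ¬IsClosed ((M ⊔ N : Submodule ℝ X) : Set X))
    (hMkM : Mk ≤ M) (hMkc : IsClosed ((Mk : Set X)))
    (hcodim : FiniteDimensional ℝ (M ⧸ Mk.comap M.subtype)) :
    ¬IsClosed ((Mk ⊔ N : Submodule ℝ X) : Set X) := by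
  intro h
  apply hsum
  set p := Mk.comap M.subtype with hp
  obtain ⟨q, hq⟩ := Submodule.exists_isCompl p
  haveI : FiniteDimensional ℝ q :=
    FiniteDimensional.of_injective (Submodule.quotientEquivOfIsCompl p q hq).symm.toLinearMap
      (Submodule.quotientEquivOfIsCompl p q hq).symm.injective
  set F := q.map M.subtype with hF
  haveI : FiniteDimensional ℝ F := Module.Finite.map q M.subtype
  have hMkF : Mk ⊔ F = M := by
    have : (p ⊔ q).map M.subtype = M := by
      rw [hq.sup_eq_top, Submodule.map_subtype_top]
    rw [Submodule.map_sup] at this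
    rwa [Submodule.map_comap_subtype, inf_eq_right.mpr hMkM] at this
  have : M ⊔ N = (Mk ⊔ N) ⊔ F := by
    rw [← hMkF]; ac_rfl
  rw [this]
  exact aux_sup_closed _ _ h inferInstance
end

section
/- Let M, N, S be closed subspaces of a Banach space X such that M + N is closed and M + N = (M ∩ N) ⊕ S. Then the natural map Φ : (M ∩ S) × (M ∩ N) × (N ∩ S) → M + N given by Φ(u, t, v) = u + t + v is a continuous linear bijection with continuous inverse, where the product carries the max norm. -/
/-- If `M + N` is closed and `M + N = (M ∩ N) ⊕ S`, then the natural map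
`Φ(u, t, v) = u + t + v` from `(M ∩ S) × (M ∩ N) × (N ∩ S)` (with the max norm)
onto `M + N` is a continuous linear bijection with continuous inverse. -/
theorem stmt13 {X : Type*} [NormedAddCommGroup X] [NormedSpace ℝ X] [CompleteSpace X]
    (M N S : Submodule ℝ X)
    (hM : IsClosed (M : Set X)) (hN : IsClosed (N : Set X)) (hS : IsClosed (S : Set X))
    (hsum : IsClosed ((M ⊔ N : Submodule ℝ X) : Set X))
    (hdecomp : M ⊔ N = (M ⊓ N) ⊔ S) (hdisj : (M ⊓ N) ⊓ S = ⊥) :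
    ∃ Φ : (↥(M ⊓ S) × ↥(M ⊓ N) × ↥(N ⊓ S)) ≃L[ℝ] ↥(M ⊔ N),
      ∀ (u : ↥(M ⊓ S)) (t : ↥(M ⊓ N)) (v : ↥(N ⊓ S)),
        ((Φ (u, t, v) : ↥(M ⊔ N)) : X) = (u : X) + (t : X) + (v : X) := by
  have hMS : IsClosed ((M ⊓ S : Submodule ℝ X) : Set X) := hM.inter hS
  have hMN : IsClosed ((M ⊓ N : Submodule ℝ X) : Set X) := hM.inter hN
  have hNS : IsClosed ((N ⊓ S : Submodule ℝ X) : Set X) := hN.inter hS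
  have : CompleteSpace ↥(M ⊓ S) := hMS.completeSpace_coe
  have : CompleteSpace ↥(M ⊓ N) := hMN.completeSpace_coe
  have : CompleteSpace ↥(N ⊓ S) := hNS.completeSpace_coe
  have : CompleteSpace ↥(M ⊔ N) := hsum.completeSpace_coe
  have hdisj' : ∀ x : X, x ∈ M → x ∈ N → x ∈ S → x = 0 := by
    intro x hxM hxN hxS
    have : x ∈ ((M ⊓ N) ⊓ S : Submodule ℝ X) := ⟨⟨hxM, hxN⟩, hxS⟩
    rw [hdisj] at this
    simpa using this
  let f0 : (↥(M ⊓ S) × ↥(M ⊓ N) × ↥(N ⊓ S)) →L[ℝ] X :=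
    (M ⊓ S).subtypeL.comp (ContinuousLinearMap.fst ℝ _ _) +
    (M ⊓ N).subtypeL.comp ((ContinuousLinearMap.fst ℝ _ _).comp (ContinuousLinearMap.snd ℝ _ _)) +
    (N ⊓ S).subtypeL.comp ((ContinuousLinearMap.snd ℝ _ _).comp (ContinuousLinearMap.snd ℝ _ _))
  have hf0 : ∀ p : ↥(M ⊓ S) × ↥(M ⊓ N) × ↥(N ⊓ S),
      f0 p = (p.1 : X) + (p.2.1 : X) + (p.2.2 : X) := fun p => rfl
  have hmem : ∀ p, f0 p ∈ M ⊔ N := by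
    rintro ⟨u, t, v⟩
    rw [hf0]
    exact add_mem (add_mem (Submodule.mem_sup_left u.2.1) (Submodule.mem_sup_left t.2.1))
      (Submodule.mem_sup_right v.2.1)
  let f := f0.codRestrict (M ⊔ N) hmem
  have hinj : LinearMap.ker (f : (↥(M ⊓ S) × ↥(M ⊓ N) × ↥(N ⊓ S)) →ₗ[ℝ] ↥(M ⊔ N)) = ⊥ := by
    rw [LinearMap.ker_eq_bot']
    rintro ⟨u, t, v⟩ hp
    have h0 : (u : X) + (t : X) + (v : X) = 0 := by
      have := congrArg Subtype.val hp
      simpa [f, hf0] using this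
    have hv0 : (v : X) = 0 := by
      have hvM : (v : X) ∈ M := by
        have hveq : (v : X) = -((u : X) + (t : X)) := eq_neg_of_add_eq_zero_right h0
        rw [hveq]
        exact neg_mem (add_mem u.2.1 t.2.1)
      exact hdisj' _ hvM v.2.1 v.2.2
    have hu0 : (u : X) = 0 := by
      have huN : (u : X) ∈ N := by
        have hueq : (u : X) = -(t : X) := by rw [hv0, add_zero] at h0; exact eq_neg_of_add_eq_zero_left h0
        rw [hueq]
        exact neg_mem t.2.2
      exact hdisj' _ u.2.1 huN u.2.2
    have ht0 : (t : X) = 0 := by rw [hu0, hv0] at h0; simpa using h0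
    ext <;> simp [hu0, ht0, hv0]
  have hsurj : LinearMap.range (f : (↥(M ⊓ S) × ↥(M ⊓ N) × ↥(N ⊓ S)) →ₗ[ℝ] ↥(M ⊔ N)) = ⊤ := by
    rw [LinearMap.range_eq_top]
    rintro ⟨x, hx⟩
    obtain ⟨m, hm, n, hn, rfl⟩ := Submodule.mem_sup.mp hx
    have hm' : m ∈ (M ⊓ N) ⊔ S := hdecomp ▸ Submodule.mem_sup_left hm
    have hn' : n ∈ (M ⊓ N) ⊔ S := hdecomp ▸ Submodule.mem_sup_right hn
    obtain ⟨t₁, ht₁, s₁, hs₁, rfl⟩ := Submodule.mem_sup.mp hm'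
    obtain ⟨t₂, ht₂, s₂, hs₂, rfl⟩ := Submodule.mem_sup.mp hn'
    have hs₁M : s₁ ∈ M := by
      have : s₁ = (t₁ + s₁) - t₁ := by abel
      rw [this]; exact sub_mem hm ht₁.1
    have hs₂N : s₂ ∈ N := by
      have : s₂ = (t₂ + s₂) - t₂ := by abel
      rw [this]; exact sub_mem hn ht₂.2
    refine ⟨(⟨s₁, hs₁M, hs₁⟩, ⟨t₁ + t₂, add_mem ht₁ ht₂⟩, ⟨s₂, hs₂N, hs₂⟩), ?_⟩
    apply Subtype.ext
    simp only [f, ContinuousLinearMap.coe_coe, ContinuousLinearMap.coe_codRestrict_apply, hf0]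
    abel
  refine ⟨ContinuousLinearEquiv.ofBijective f hinj hsurj, ?_⟩
  intro u t v
  simp [ContinuousLinearEquiv.ofBijective, f, hf0]
end

section
/- Let M_n ⊆ ℓ∞ be the subspace of sequences supported on B_n, where (B_n) is a partition of ℕ into nonempty finite disjoint sets. Then the lower uniform λ-adjustment of (M_n) with the null subspace satisfies λ_ℕ[M_n, {0}] ≥ 1/2. -/
/-- The set of `λ ≥ 0` such that `(M_n)` is lower uniformly `λ`-adjusted with `(P_n)`
along the infinite index set `N'`. -/
def lowerAdjSet {X : Type*} [NormedAddCommGroup X] [NormedSpace ℝ X]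
    (N' : Set ℕ) (M P : ℕ → Submodule ℝ X) : Set ℝ :=
  {lam : ℝ | 0 ≤ lam ∧
    ∀ η > (0 : ℝ), ∀ N'' ⊆ N', N''.Infinite →
      ∀ x : ℕ → X, (∀ n ∈ N'', x n ∈ M n ∧ ‖x n‖ = 1) →
        ∃ N''' ⊆ N'', N'''.Infinite ∧
          ∃ y : ℕ → X, (∀ n ∈ N''', y n ∈ P n) ∧ ∃ z : X,
            Filter.limsup (fun n => ‖x n - y n - z‖)
              (Filter.atTop ⊓ Filter.principal N''') ≤ lam + η}

/-- The lower uniform `λ`-adjustment `λ_{N'}[M_n, P_n]`. -/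
noncomputable def lambdaAdj {X : Type*} [NormedAddCommGroup X] [NormedSpace ℝ X]
    (N' : Set ℕ) (M P : ℕ → Submodule ℝ X) : ℝ :=
  sInf (lowerAdjSet N' M P)

open Filter

lemma neBot_infinite {s : Set ℕ} (hs : s.Infinite) : (atTop ⊓ principal s).NeBot := by
  rw [Filter.inf_principal_neBot_iff]
  intro U hU
  obtain ⟨a, ha⟩ := Filter.mem_atTop_sets.1 hU
  obtain ⟨b, hb, hab⟩ := hs.exists_gt a
  exact ⟨b, ha b hab.le, hb⟩

/-- For the subspaces `M_n ⊆ ℓ∞` of sequences supported on the members `B_n` of a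
partition of `ℕ` into nonempty finite disjoint sets, `λ_ℕ[M_n, {0}] ≥ 1/2`. -/
theorem stmt16 (B : ℕ → Set ℕ)
    (hBne : ∀ n, (B n).Nonempty) (hBfin : ∀ n, (B n).Finite)
    (hBdisj : ∀ i j, i ≠ j → Disjoint (B i) (B j))
    (hBcover : ⋃ n, B n = Set.univ)
    (M : ℕ → Submodule ℝ (lp (fun _ : ℕ => ℝ) ⊤))
    (hM : ∀ (n : ℕ) (f : lp (fun _ : ℕ => ℝ) ⊤),
      f ∈ M n ↔ ∀ i ∉ B n, (f : ∀ _ : ℕ, ℝ) i = 0) :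
    (1 : ℝ) / 2 ≤ lambdaAdj Set.univ M (fun _ => (⊥ : Submodule ℝ (lp (fun _ : ℕ => ℝ) ⊤))) := by
  classical
  apply le_csInf
  · -- nonempty: 1 belongs
    refine ⟨1, zero_le_one, ?_⟩
    intro η hη N'' _ hinf x hx
    refine ⟨N'', le_refl _, hinf, 0, fun n _ => Submodule.zero_mem _, 0, ?_⟩
    haveI := neBot_infinite hinf
    have hev : ∀ᶠ n in atTop ⊓ principal N'', (fun n => ‖x n - (0 : ℕ → lp (fun _ : ℕ => ℝ) ⊤) n - 0‖) n = (fun _ => (1:ℝ)) n := by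
      filter_upwards [Filter.mem_inf_of_right (Filter.mem_principal_self N'')] with n hn
      simp only [Pi.zero_apply, sub_zero]
      exact (hx n hn).2
    rw [Filter.limsup_congr hev, Filter.limsup_const]
    linarith
  · -- lower bound
    rintro lam ⟨hlam0, hprop⟩
    by_contra hc
    push_neg at hc
    set η : ℝ := (1/2 - lam)/2 with hηdef
    have hη : 0 < η := by simp only [hηdef]; linarith
    -- the indicator vectors
    have hmem : ∀ n, Memℓp (fun i => if i ∈ B n then (1:ℝ) else 0) ⊤ := by
      intro n
      apply memℓp_infty
      refine ⟨1, ?_⟩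
      rintro r ⟨i, rfl⟩
      by_cases h : i ∈ B n <;> simp [h]
    set x : ℕ → lp (fun _ : ℕ => ℝ) ⊤ := fun n => ⟨fun i => if i ∈ B n then (1:ℝ) else 0, hmem n⟩ with hxdef
    have hxcoe : ∀ n i, (x n : ∀ _ : ℕ, ℝ) i = if i ∈ B n then (1:ℝ) else 0 := fun n i => rfl
    have hxnorm : ∀ n, ‖x n‖ = 1 := by
      intro n
      rw [lp.norm_eq_ciSup]
      apply le_antisymm
      · apply ciSup_le
        intro i
        rw [hxcoe]
        by_cases h : i ∈ B n <;> simp [h]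
      · obtain ⟨i, hi⟩ := hBne n
        refine le_trans ?_ (le_ciSup ?_ i)
        · show (1:ℝ) ≤ ‖(x n : ∀ _ : ℕ, ℝ) i‖
          rw [hxcoe]; simp [hi]
        · refine ⟨1, ?_⟩
          rintro r ⟨j, rfl⟩
          show ‖(x n : ∀ _ : ℕ, ℝ) j‖ ≤ 1
          rw [hxcoe]
          by_cases h : j ∈ B n <;> simp [h]
    have hxM : ∀ n, x n ∈ M n := by
      intro n
      rw [hM]
      intro i hi
      rw [hxcoe]
      simp [hi]
    obtain ⟨N''', hsub, hinf, y, hy, z, hz⟩ :=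
      hprop η hη Set.univ (le_refl _) Set.infinite_univ x (fun n _ => ⟨hxM n, hxnorm n⟩)
    haveI := neBot_infinite hinf
    -- y n = 0 on N'''
    -- key: at most one n with ‖x n - z‖ < 1/2
    have key : ∀ m n, m ≠ n → (1:ℝ)/2 ≤ ‖x m - z‖ ∨ (1:ℝ)/2 ≤ ‖x n - z‖ := by
      intro m n hmn
      obtain ⟨i, hi⟩ := hBne m
      have him : (x m : ∀ _ : ℕ, ℝ) i = 1 := by rw [hxcoe]; simp [hi]
      have hin : (x n : ∀ _ : ℕ, ℝ) i = 0 := by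
        rw [hxcoe]
        have : i ∉ B n := fun h => (hBdisj m n hmn).ne_of_mem hi h rfl
        simp [this]
      have h1 : |1 - (z : ∀ _ : ℕ, ℝ) i| ≤ ‖x m - z‖ := by
        have h := lp.norm_apply_le_norm ENNReal.top_ne_zero (x m - z) i
        rwa [lp.coeFn_sub, Pi.sub_apply, him, Real.norm_eq_abs] at h
      have h2 : |(z : ∀ _ : ℕ, ℝ) i| ≤ ‖x n - z‖ := by
        have h := lp.norm_apply_le_norm ENNReal.top_ne_zero (x n - z) i
        rwa [lp.coeFn_sub, Pi.sub_apply, hin, Real.norm_eq_abs, zero_sub, abs_neg] at h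
      by_contra h
      push_neg at h
      obtain ⟨ha, hb⟩ := h
      have := abs_sub_abs_le_abs_sub (1 - (z : ∀ _ : ℕ, ℝ) i) (-(z : ∀ _ : ℕ, ℝ) i)
      have habs : (1:ℝ) ≤ |1 - (z : ∀ _ : ℕ, ℝ) i| + |(z : ∀ _ : ℕ, ℝ) i| := by
        have := abs_add_le (1 - (z : ∀ _ : ℕ, ℝ) i) ((z : ∀ _ : ℕ, ℝ) i)
        simpa using this
      linarith
    -- so eventually (all but at most one n), ‖x n - z‖ ≥ 1/2
    have hev : ∃ᶠ n in atTop ⊓ principal N''', (1:ℝ)/2 ≤ ‖x n - y n - z‖ := by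
      -- there is at most one bad n
      have hone : ∀ m n, m ∈ N''' → n ∈ N''' → m ≠ n →
          (1:ℝ)/2 ≤ ‖x m - y m - z‖ ∨ (1:ℝ)/2 ≤ ‖x n - y n - z‖ := by
        intro m n hm hn hmn
        have hym : y m = 0 := by simpa using hy m hm
        have hyn : y n = 0 := by simpa using hy n hn
        rw [hym, hyn, sub_zero, sub_zero]
        exact key m n hmn
      rw [Filter.frequently_iff]
      intro U hU
      haveI := neBot_infinite hinf
      -- U ∩ N''' meets; get two distinct elements in U
      obtain ⟨V, hV, W, hW, hVW⟩ := Filter.mem_inf_iff.1 hU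
      obtain ⟨a, ha⟩ := Filter.mem_atTop_sets.1 hV
      have hWN : N''' ⊆ W := hW
      obtain ⟨m, hmN, hma⟩ := hinf.exists_gt a
      obtain ⟨n, hnN, hnm⟩ := hinf.exists_gt m
      have hmU : m ∈ U := by rw [hVW]; exact ⟨ha m hma.le, hWN hmN⟩
      have hnU : n ∈ U := by rw [hVW]; exact ⟨ha n (hma.le.trans hnm.le), hWN hnN⟩
      rcases hone m n hmN hnN hnm.ne with h | h
      exacts [⟨m, hmU, h⟩, ⟨n, hnU, h⟩]
    have hbdd : Filter.IsBoundedUnder (· ≤ ·) (atTop ⊓ principal N''')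
        (fun n => ‖x n - y n - z‖) := by
      refine ⟨1 + ‖z‖ + 1, ?_⟩
      rw [Filter.eventually_map]
      filter_upwards [Filter.mem_inf_of_right (Filter.mem_principal_self N''')] with n hn
      have hyn : y n = 0 := by simpa using hy n hn
      calc ‖x n - y n - z‖ ≤ ‖x n - y n‖ + ‖z‖ := norm_sub_le _ _
        _ = ‖x n‖ + ‖z‖ := by rw [hyn, sub_zero]
        _ ≤ 1 + ‖z‖ + 1 := by rw [hxnorm]; linarith [norm_nonneg z]
    have := Filter.le_limsup_of_frequently_le hev hbdd
    have : (1:ℝ)/2 ≤ lam + η := le_trans this hz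
    simp only [hηdef] at this
    linarith
end

section
/- Let X, Y be Banach spaces and (A_n) a sequence of strictly singular bounded operators from X to Y. Then for every ε > 0 and every sequence of infinite-dimensional closed subspaces K_n of the graphs G_{A_n} (indexed along an infinite subset of ℕ), there exist a further infinite subset and infinite-dimensional closed subspaces L_n ⊆ K_n such that the restriction operators corresponding to L_n have norm at most ε; in particular the strictly singular uniform λ-adjustment SSλ[A_n, 0] of (A_n) with the zero operator equals 0. -/
/-- The strictly singular uniform λ-adjustment `SSλ_{N'}[M_n, P_n]`. -/
noncomputable def ssLambdaAdj {X : Type*} [NormedAddCommGroup X] [NormedSpace ℝ X]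
    (N' : Set ℕ) (M P : ℕ → Submodule ℝ X) : ℝ :=
  sInf {lam : ℝ | 0 ≤ lam ∧
    ∀ N'' ⊆ N', N''.Infinite → ∀ K : ℕ → Submodule ℝ X,
      (∀ n ∈ N'', K n ≤ M n ∧ IsClosed ((K n : Set X)) ∧ ¬FiniteDimensional ℝ (K n)) →
      ∃ N''' ⊆ N'', N'''.Infinite ∧ ∃ L : ℕ → Submodule ℝ X,
        (∀ n ∈ N''', L n ≤ K n ∧ IsClosed ((L n : Set X)) ∧ ¬FiniteDimensional ℝ (L n)) ∧
        lambdaAdj N''' L P ≤ lam}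

section AuxSS
open Filter Finset


lemma infdim_inf_ker {X : Type*} [NormedAddCommGroup X] [NormedSpace ℝ X]
    (Z : Submodule ℝ X) (hZ : ¬FiniteDimensional ℝ Z) (f : X →L[ℝ] ℝ) :
    ¬FiniteDimensional ℝ (Z ⊓ LinearMap.ker (f : X →ₗ[ℝ] ℝ) : Submodule ℝ X) := by
  intro h
  by_cases hw : ∃ w ∈ Z, f w ≠ 0
  · obtain ⟨w, hwZ, hfw⟩ := hw
    have hle : Z ≤ (Z ⊓ LinearMap.ker (f : X →ₗ[ℝ] ℝ)) ⊔ Submodule.span ℝ {w} := by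
      intro z hz
      have hzz : z = (z - (f z / f w) • w) + (f z / f w) • w := by abel
      rw [hzz]
      apply Submodule.add_mem
      · apply Submodule.mem_sup_left
        refine Submodule.mem_inf.mpr ⟨Submodule.sub_mem _ hz (Submodule.smul_mem _ _ hwZ), ?_⟩
        rw [LinearMap.mem_ker]
        simp [div_mul_cancel₀, hfw]
      · exact Submodule.mem_sup_right (Submodule.smul_mem _ _ (Submodule.mem_span_singleton_self w))
    exact hZ (Submodule.finiteDimensional_of_le hle)
  · push_neg at hw
    have heq : Z ⊓ LinearMap.ker (f : X →ₗ[ℝ] ℝ) = Z := by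
      rw [inf_eq_left]
      intro z hz
      rw [LinearMap.mem_ker]
      exact hw z hz
    rw [heq] at h
    exact hZ h

lemma key {X Y : Type*} [NormedAddCommGroup X] [NormedSpace ℝ X]
    [NormedAddCommGroup Y] [NormedSpace ℝ Y]
    (A : X →L[ℝ] Y)
    (hss : ∀ ε > (0:ℝ), ∀ Z : Submodule ℝ X, IsClosed ((Z : Set X)) → ¬FiniteDimensional ℝ Z →
      ∃ z ∈ Z, z ≠ 0 ∧ ‖A z‖ < ε * ‖z‖)
    (ε : ℝ) (hε : 0 < ε) (Z : Submodule ℝ X) (hZc : IsClosed ((Z : Set X)))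
    (hZd : ¬FiniteDimensional ℝ Z) :
    ∃ Z' : Submodule ℝ X, Z' ≤ Z ∧ IsClosed ((Z' : Set X)) ∧ ¬FiniteDimensional ℝ Z' ∧
      ∀ z ∈ Z', ‖A z‖ ≤ ε * ‖z‖ := by
  -- step existence
  have step : ∀ (k : ℕ) (W : Submodule ℝ X), W ≤ Z → IsClosed ((W : Set X)) →
      ¬FiniteDimensional ℝ W →
      ∃ (z : X) (f : X →L[ℝ] ℝ), z ∈ W ∧ ‖z‖ = 1 ∧ ‖A z‖ ≤ ε / 2 * (4⁻¹ : ℝ) ^ k ∧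
        f z = 1 ∧ ‖f‖ = 1 := by
    intro k W _hle hWc hWd
    have hpos : (0:ℝ) < ε / 2 * (4⁻¹ : ℝ) ^ k := by positivity
    obtain ⟨z0, hz0W, hz0ne, hz0A⟩ := hss _ hpos W hWc hWd
    have hn0 : ‖z0‖ ≠ 0 := norm_ne_zero_iff.mpr hz0ne
    have hznorm : ‖‖z0‖⁻¹ • z0‖ = 1 := by simp [norm_smul, hn0]
    obtain ⟨g, hg1, hg2⟩ := exists_dual_vector ℝ (‖z0‖⁻¹ • z0)
      (by rw [← norm_ne_zero_iff, hznorm]; norm_num)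
    refine ⟨‖z0‖⁻¹ • z0, g, Submodule.smul_mem _ _ hz0W, hznorm, ?_, ?_, hg1⟩
    · rw [map_smul, norm_smul]
      simp only [norm_inv, norm_norm]
      rw [inv_mul_le_iff₀ (by positivity : (0:ℝ) < ‖z0‖), mul_comm]
      exact hz0A.le
    · rw [hg2, hznorm]; norm_num
  choose! zfun ffun hstep using step
  -- the decreasing subspaces
  let W : ℕ → Submodule ℝ X := fun k =>
    Nat.rec (motive := fun _ => Submodule ℝ X) Z
      (fun k Wk => Wk ⊓ LinearMap.ker (ffun k Wk : X →ₗ[ℝ] ℝ)) k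
  have hWsucc : ∀ k, W (k+1) = W k ⊓ LinearMap.ker (ffun k (W k) : X →ₗ[ℝ] ℝ) := fun _ => rfl
  have inv : ∀ k, W k ≤ Z ∧ IsClosed ((W k : Set X)) ∧ ¬FiniteDimensional ℝ (W k) := by
    intro k
    induction k with
    | zero => exact ⟨le_rfl, hZc, hZd⟩
    | succ k ih =>
      refine ⟨le_trans inf_le_left ih.1, ?_, infdim_inf_ker _ ih.2.2 _⟩
      have : ((W k ⊓ LinearMap.ker (ffun k (W k) : X →ₗ[ℝ] ℝ) : Submodule ℝ X) : Set X)
          = (W k : Set X) ∩ (LinearMap.ker (ffun k (W k) : X →ₗ[ℝ] ℝ) : Set X) := rfl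
      rw [hWsucc, this]
      exact ih.2.1.inter (ContinuousLinearMap.isClosed_ker (ffun k (W k)))
  set zs : ℕ → X := fun k => zfun k (W k) with hzs
  set fs : ℕ → (X →L[ℝ] ℝ) := fun k => ffun k (W k) with hfs
  have hprop : ∀ k, zs k ∈ W k ∧ ‖zs k‖ = 1 ∧ ‖A (zs k)‖ ≤ ε / 2 * (4⁻¹:ℝ) ^ k ∧
      fs k (zs k) = 1 ∧ ‖fs k‖ = 1 :=
    fun k => hstep k (W k) (inv k).1 (inv k).2.1 (inv k).2.2
  have hWanti : ∀ j k, k ≤ j → W j ≤ W k := by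
    intro j k h
    induction j with
    | zero => simp_all
    | succ j ih =>
      rcases Nat.lt_or_ge k (j+1) with h' | h'
      · exact le_trans (by rw [hWsucc]; exact inf_le_left) (ih (Nat.lt_succ_iff.mp h'))
      · have : k = j + 1 := le_antisymm h h'
        subst this; exact le_rfl
  have horth : ∀ k j, k < j → fs k (zs j) = 0 := by
    intro k j hkj
    have h1 : zs j ∈ W j := (hprop j).1
    have h2 : W j ≤ W (k+1) := hWanti j (k+1) hkj
    have h3 : zs j ∈ LinearMap.ker (fs k : X →ₗ[ℝ] ℝ) := by
      have := h2 h1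
      rw [hWsucc] at this
      exact this.2
    exact h3
  -- coefficient recovery
  have coef : ∀ (n k : ℕ), k < n → ∀ a : ℕ → ℝ,
      fs k (∑ i ∈ Finset.range n, a i • zs i)
        = a k + ∑ i ∈ Finset.range k, a i * fs k (zs i) := by
    intro n k hk a
    rw [map_sum]
    have h1 : ∀ i ∈ Finset.range n, fs k (a i • zs i) = a i * fs k (zs i) := by
      intro i _; rw [map_smul]; rfl
    rw [Finset.sum_congr rfl h1]
    rw [← Finset.sum_subset (Finset.range_subset_range.mpr hk)
      (fun i _ hi => by
        have : k < i := by
          by_contra hc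
          exact hi (Finset.mem_range.mpr (Nat.lt_succ_of_le (le_of_not_gt hc)))
        rw [horth k i this, mul_zero])]
    rw [Finset.sum_range_succ, (hprop k).2.2.2.1, mul_one, add_comm]
  have pow_sum : ∀ k : ℕ, (1:ℝ) + ∑ i ∈ Finset.range k, 2^i = 2^k := by
    intro k
    induction k with
    | zero => simp
    | succ k ih => rw [Finset.sum_range_succ, ← add_assoc, ih, pow_succ]; ring
  -- coefficient bound
  have cbound : ∀ (n : ℕ) (a : ℕ → ℝ) (k : ℕ), k < n →
      |a k| ≤ 2^k * ‖∑ i ∈ Finset.range n, a i • zs i‖ := by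
    intro n a k
    induction k using Nat.strong_induction_on with
    | _ k ih =>
      intro hk
      set x := ∑ i ∈ Finset.range n, a i • zs i with hx
      have h1 : a k = fs k x - ∑ i ∈ Finset.range k, a i * fs k (zs i) := by
        rw [coef n k hk a]; ring
      have h2 : |fs k x| ≤ ‖x‖ := by
        have := (fs k).le_opNorm x
        rwa [(hprop k).2.2.2.2, one_mul, Real.norm_eq_abs] at this
      have h3 : ∀ i ∈ Finset.range k, |a i * fs k (zs i)| ≤ 2^i * ‖x‖ := by
        intro i hi
        rw [abs_mul]
        have hfi : |fs k (zs i)| ≤ 1 := by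
          have := (fs k).le_opNorm (zs i)
          rwa [(hprop k).2.2.2.2, one_mul, (hprop i).2.1, Real.norm_eq_abs] at this
        calc |a i| * |fs k (zs i)| ≤ |a i| * 1 := by
              exact mul_le_mul_of_nonneg_left hfi (abs_nonneg _)
          _ = |a i| := mul_one _
          _ ≤ 2^i * ‖x‖ := ih i (Finset.mem_range.mp hi) (lt_trans (Finset.mem_range.mp hi) hk)
      calc |a k| ≤ |fs k x| + |∑ i ∈ Finset.range k, a i * fs k (zs i)| := by
            rw [h1]; exact abs_sub _ _
        _ ≤ ‖x‖ + ∑ i ∈ Finset.range k, |a i * fs k (zs i)| :=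
            add_le_add h2 (Finset.abs_sum_le_sum_abs _ _)
        _ ≤ ‖x‖ + ∑ i ∈ Finset.range k, 2^i * ‖x‖ := by
            exact add_le_add_right (Finset.sum_le_sum h3) _
        _ = (1 + ∑ i ∈ Finset.range k, 2^i) * ‖x‖ := by
            rw [add_mul, one_mul, Finset.sum_mul]
        _ = 2^k * ‖x‖ := by rw [pow_sum]
  -- linear independence
  have hindep : LinearIndependent ℝ zs := by
    rw [linearIndependent_iff']
    intro s g hsum i hi
    set n := s.sup id + 1 with hn
    have hsub : s ⊆ Finset.range n := by
      intro j hj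
      exact Finset.mem_range.mpr (Nat.lt_succ_of_le (Finset.le_sup (f := id) hj))
    set a : ℕ → ℝ := fun j => if j ∈ s then g j else 0 with ha
    have hrep : ∑ j ∈ Finset.range n, a j • zs j = 0 := by
      rw [← Finset.sum_subset hsub (fun j _ hj => by simp [ha, hj])]
      rw [← hsum]
      exact Finset.sum_congr rfl (fun j hj => by simp [ha, hj])
    have hzero : ∀ k, a k = 0 := by
      intro k
      induction k using Nat.strong_induction_on with
      | _ k ih =>
        by_cases hk : k < n
        · have := coef n k hk a
          rw [hrep, map_zero] at this
          have hsum0 : ∑ i ∈ Finset.range k, a i * fs k (zs i) = 0 :=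
            Finset.sum_eq_zero (fun i hi => by rw [ih i (Finset.mem_range.mp hi), zero_mul])
          rw [hsum0, add_zero] at this
          exact this.symm
        · have : k ∉ s := fun hc => hk (Finset.mem_range.mp (hsub hc))
          simp [ha, this]
    have h := hzero i
    rw [show a i = if i ∈ s then g i else 0 from rfl, if_pos hi] at h
    exact h
  -- the subspace
  refine ⟨(Submodule.span ℝ (Set.range zs)).topologicalClosure, ?_, ?_, ?_, ?_⟩
  · apply Submodule.topologicalClosure_minimal
    · rw [Submodule.span_le]
      rintro _ ⟨k, rfl⟩
      exact (inv k).1 (hprop k).1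
    · exact hZc
  · exact Submodule.isClosed_topologicalClosure _
  · intro hfd
    have hle := Submodule.le_topologicalClosure (Submodule.span ℝ (Set.range zs))
    have hmem : ∀ k, zs k ∈ (Submodule.span ℝ (Set.range zs)).topologicalClosure :=
      fun k => hle (Submodule.subset_span (Set.mem_range_self k))
    have hind2 : LinearIndependent ℝ
        (fun k => (⟨zs k, hmem k⟩ : (Submodule.span ℝ (Set.range zs)).topologicalClosure)) := by
      apply LinearIndependent.of_comp
        ((Submodule.span ℝ (Set.range zs)).topologicalClosure.subtype)
      exact hindep
    exact Module.Finite.not_linearIndependent_of_infinite _ hind2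
  · -- norm bound
    have hSclosed : IsClosed {x : X | ‖A x‖ ≤ ε * ‖x‖} :=
      isClosed_le (A.continuous.norm) (continuous_const.mul continuous_norm)
    have hspan : (Submodule.span ℝ (Set.range zs) : Set X) ⊆ {x : X | ‖A x‖ ≤ ε * ‖x‖} := by
      intro x hx
      obtain ⟨c, rfl⟩ := Finsupp.mem_span_range_iff_exists_finsupp.mp hx
      set n := c.support.sup id + 1 with hn
      have hsub : c.support ⊆ Finset.range n :=
        fun j hj => Finset.mem_range.mpr (Nat.lt_succ_of_le (Finset.le_sup (f := id) hj))
      have hrep : (c.sum fun i a => a • zs i) = ∑ i ∈ Finset.range n, c i • zs i :=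
        Finsupp.sum_of_support_subset c hsub _ (fun i _ => zero_smul _ _)
      rw [Set.mem_setOf_eq, hrep]
      set x := ∑ i ∈ Finset.range n, c i • zs i with hx'
      calc ‖A x‖ = ‖∑ i ∈ Finset.range n, c i • A (zs i)‖ := by
            rw [hx', map_sum]
            exact congrArg _ (Finset.sum_congr rfl (fun i _ => by rw [map_smul]))
        _ ≤ ∑ i ∈ Finset.range n, ‖c i • A (zs i)‖ := norm_sum_le _ _
        _ ≤ ∑ i ∈ Finset.range n, (ε / 2 * (2⁻¹:ℝ)^i) * ‖x‖ := by
            apply Finset.sum_le_sum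
            intro i hi
            rw [norm_smul, Real.norm_eq_abs]
            calc |c i| * ‖A (zs i)‖ ≤ (2^i * ‖x‖) * (ε / 2 * (4⁻¹:ℝ)^i) := by
                  apply mul_le_mul (cbound n (fun j => c j) i (Finset.mem_range.mp hi))
                    (hprop i).2.2.1 (norm_nonneg _)
                  positivity
              _ = (ε / 2 * (2⁻¹:ℝ)^i) * ‖x‖ := by
                  have h4 : (2:ℝ)^i * (4⁻¹:ℝ)^i = (2⁻¹:ℝ)^i := by
                    rw [← mul_pow]; norm_num
                  rw [← h4]; ring
        _ = (ε / 2) * (∑ i ∈ Finset.range n, (2⁻¹:ℝ)^i) * ‖x‖ := by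
            rw [Finset.mul_sum, Finset.sum_mul]
        _ ≤ (ε / 2) * 2 * ‖x‖ := by
            apply mul_le_mul_of_nonneg_right _ (norm_nonneg _)
            apply mul_le_mul_of_nonneg_left _ (by positivity)
            have := sum_geometric_two_le n
            simpa [one_div] using this
        _ = ε * ‖x‖ := by ring
    intro z hz
    have : (((Submodule.span ℝ (Set.range zs)).topologicalClosure : Submodule ℝ X) : Set X)
        ⊆ {x : X | ‖A x‖ ≤ ε * ‖x‖} := by
      rw [Submodule.topologicalClosure_coe]
      exact closure_minimal hspan hSclosed
    exact this hz

lemma key_graph {X Y : Type*} [NormedAddCommGroup X] [NormedSpace ℝ X]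
    [NormedAddCommGroup Y] [NormedSpace ℝ Y]
    (A : X →L[ℝ] Y)
    (hss : ∀ ε > (0:ℝ), ∀ Z : Submodule ℝ X, IsClosed ((Z : Set X)) → ¬FiniteDimensional ℝ Z →
      ∃ z ∈ Z, z ≠ 0 ∧ ‖A z‖ < ε * ‖z‖)
    (ε : ℝ) (hε : 0 < ε) (K : Submodule ℝ (X × Y))
    (hKg : K ≤ LinearMap.graph A.toLinearMap)
    (hKc : IsClosed ((K : Set (X × Y)))) (hKd : ¬FiniteDimensional ℝ K) :
    ∃ L : Submodule ℝ (X × Y), L ≤ K ∧ IsClosed ((L : Set (X × Y))) ∧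
      ¬FiniteDimensional ℝ L ∧ ∀ p ∈ L, ‖p.2‖ ≤ ε * ‖p.1‖ := by
  set G : X →L[ℝ] X × Y := (ContinuousLinearMap.id ℝ X).prod A with hG
  have hGapp : ∀ x, (G : X →ₗ[ℝ] X × Y) x = (x, A x) := fun x => rfl
  have hGinj : Function.Injective G := fun a b h => congrArg Prod.fst h
  set Z : Submodule ℝ X := K.comap (G : X →ₗ[ℝ] X × Y) with hZ
  have hZc : IsClosed ((Z : Set X)) := by
    have : (Z : Set X) = G ⁻¹' (K : Set (X × Y)) := rfl
    rw [this]
    exact hKc.preimage G.continuous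
  have hmap : Z.map (G : X →ₗ[ℝ] X × Y) = K := by
    apply le_antisymm
    · exact Submodule.map_comap_le _ _
    · intro p hp
      have hgr := hKg hp
      rw [LinearMap.mem_graph_iff] at hgr
      have hpe : (G : X →ₗ[ℝ] X × Y) p.1 = p := by
        rw [hGapp]; exact Prod.ext rfl hgr.symm
      exact Submodule.mem_map.mpr ⟨p.1, Submodule.mem_comap.mpr (by rw [hpe]; exact hp), hpe⟩
  have hZd : ¬FiniteDimensional ℝ Z := by
    intro h
    apply hKd
    rw [← hmap]
    infer_instance
  obtain ⟨Z', hZ'le, hZ'c, hZ'd, hZ'b⟩ := key A hss ε hε Z hZc hZd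
  refine ⟨Z'.map (G : X →ₗ[ℝ] X × Y), ?_, ?_, ?_, ?_⟩
  · rw [← hmap]; exact Submodule.map_mono hZ'le
  · have : ((Z'.map (G : X →ₗ[ℝ] X × Y) : Submodule ℝ (X × Y)) : Set (X × Y))
        = {p : X × Y | p.2 = A p.1} ∩ (Prod.fst ⁻¹' (Z' : Set X)) := by
      ext p
      constructor
      · rintro ⟨x, hx, rfl⟩
        exact ⟨rfl, hx⟩
      · rintro ⟨h1, h2⟩
        exact ⟨p.1, h2, by rw [hGapp]; exact Prod.ext rfl h1.symm⟩
        
    rw [this]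
    exact ((isClosed_eq continuous_snd (A.continuous.comp continuous_fst)).inter
      (hZ'c.preimage continuous_fst))
  · intro h
    apply hZ'd
    have e := Submodule.equivMapOfInjective (G : X →ₗ[ℝ] X × Y) hGinj Z'
    exact Module.Finite.equiv e.symm
  · rintro p ⟨x, hx, rfl⟩
    rw [hGapp x]
    simpa using hZ'b x hx

lemma neBot_aux (s : Set ℕ) (hs : s.Infinite) : (Filter.atTop ⊓ Filter.principal s).NeBot := by
  rw [← Filter.frequently_mem_iff_neBot]
  rw [Filter.frequently_atTop]
  intro a
  obtain ⟨b, hb, hab⟩ := hs.exists_gt a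
  exact ⟨b, hab.le, hb⟩


end AuxSS

/-- Strict singularity of a sequence of bounded operators implies that, inside their
graphs, infinite-dimensional closed subspaces can always be refined to ones on which the
corresponding restriction operators have norm at most `ε`; in particular the strictly
singular uniform λ-adjustment of `(A_n)` with the zero operator is `0`. -/
theorem stmt17 {X Y : Type*} [NormedAddCommGroup X] [NormedSpace ℝ X] [CompleteSpace X]
    [NormedAddCommGroup Y] [NormedSpace ℝ Y] [CompleteSpace Y]
    (A : ℕ → (X →L[ℝ] Y))
    (hss : ∀ n, ∀ ε > (0 : ℝ), ∀ Z : Submodule ℝ X, IsClosed ((Z : Set X)) →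
      ¬FiniteDimensional ℝ Z → ∃ z ∈ Z, z ≠ 0 ∧ ‖A n z‖ < ε * ‖z‖) :
    (∀ ε > (0 : ℝ), ∀ N'' : Set ℕ, N''.Infinite → ∀ K : ℕ → Submodule ℝ (X × Y),
      (∀ n ∈ N'', K n ≤ LinearMap.graph (A n).toLinearMap ∧
        IsClosed ((K n : Set (X × Y))) ∧ ¬FiniteDimensional ℝ (K n)) →
      ∃ N''' ⊆ N'', N'''.Infinite ∧ ∃ L : ℕ → Submodule ℝ (X × Y),
        ∀ n ∈ N''', L n ≤ K n ∧ IsClosed ((L n : Set (X × Y))) ∧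
          ¬FiniteDimensional ℝ (L n) ∧ ∀ p ∈ L n, ‖p.2‖ ≤ ε * ‖p.1‖) ∧
    ssLambdaAdj Set.univ (fun n => LinearMap.graph (A n).toLinearMap)
      (fun _ => LinearMap.graph (0 : X →ₗ[ℝ] Y)) = 0 := by
  have part1 : ∀ ε > (0 : ℝ), ∀ N'' : Set ℕ, N''.Infinite → ∀ K : ℕ → Submodule ℝ (X × Y),
      (∀ n ∈ N'', K n ≤ LinearMap.graph (A n).toLinearMap ∧
        IsClosed ((K n : Set (X × Y))) ∧ ¬FiniteDimensional ℝ (K n)) →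
      ∃ N''' ⊆ N'', N'''.Infinite ∧ ∃ L : ℕ → Submodule ℝ (X × Y),
        ∀ n ∈ N''', L n ≤ K n ∧ IsClosed ((L n : Set (X × Y))) ∧
          ¬FiniteDimensional ℝ (L n) ∧ ∀ p ∈ L n, ‖p.2‖ ≤ ε * ‖p.1‖ := by
    intro ε hε N'' hN'' K hK
    have hex : ∀ n, ∃ L : Submodule ℝ (X × Y), n ∈ N'' →
        (L ≤ K n ∧ IsClosed ((L : Set (X × Y))) ∧ ¬FiniteDimensional ℝ L ∧
          ∀ p ∈ L, ‖p.2‖ ≤ ε * ‖p.1‖) := by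
      intro n
      by_cases h : n ∈ N''
      · obtain ⟨L, h1, h2, h3, h4⟩ := key_graph (A n) (hss n) ε hε (K n)
          (hK n h).1 (hK n h).2.1 (hK n h).2.2
        exact ⟨L, fun _ => ⟨h1, h2, h3, h4⟩⟩
      · exact ⟨⊥, fun h' => absurd h' h⟩
    choose L hL using hex
    exact ⟨N'', Set.Subset.rfl, hN'', L, fun n hn =>
      ⟨(hL n hn).1, (hL n hn).2.1, (hL n hn).2.2.1, (hL n hn).2.2.2⟩⟩
  refine ⟨part1, ?_⟩
  set S := {lam : ℝ | 0 ≤ lam ∧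
    ∀ N'' ⊆ (Set.univ : Set ℕ), N''.Infinite → ∀ K : ℕ → Submodule ℝ (X × Y),
      (∀ n ∈ N'', K n ≤ LinearMap.graph (A n).toLinearMap ∧
        IsClosed ((K n : Set (X × Y))) ∧ ¬FiniteDimensional ℝ (K n)) →
      ∃ N''' ⊆ N'', N'''.Infinite ∧ ∃ L : ℕ → Submodule ℝ (X × Y),
        (∀ n ∈ N''', L n ≤ K n ∧ IsClosed ((L n : Set (X × Y))) ∧
          ¬FiniteDimensional ℝ (L n)) ∧
        lambdaAdj N''' L (fun _ => LinearMap.graph (0 : X →ₗ[ℝ] Y)) ≤ lam} with hS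
  have hmem : ∀ ε > (0:ℝ), ε ∈ S := by
    intro ε hε
    refine ⟨hε.le, ?_⟩
    intro N'' _hsub hinf K hK
    obtain ⟨N''', hsub3, hinf3, L, hL⟩ := part1 ε hε N'' hinf K hK
    refine ⟨N''', hsub3, hinf3, L, fun n hn =>
      ⟨(hL n hn).1, (hL n hn).2.1, (hL n hn).2.2.1⟩, ?_⟩
    -- lambdaAdj ≤ ε
    apply csInf_le ⟨0, fun x hx => hx.1⟩
    refine ⟨hε.le, ?_⟩
    intro η hη N4 hsub4 hinf4 x hx
    refine ⟨N4, Set.Subset.rfl, hinf4, fun n => ((x n).1, 0), fun n hn => ?_, 0, ?_⟩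
    · rw [LinearMap.mem_graph_iff]; simp
    · have hpt : ∀ n ∈ N4, ‖x n - ((x n).1, (0:Y)) - 0‖ ≤ ε := by
        intro n hn
        have hxn := hx n hn
        have hb := (hL n (hsub4 hn)).2.2.2 (x n) hxn.1
        have h1 : x n - ((x n).1, (0:Y)) - 0 = (0, (x n).2) := by
          ext <;> simp
        rw [h1]
        have h2 : ‖((0:X), (x n).2)‖ = ‖(x n).2‖ := by
          rw [Prod.norm_def]
          simp
        rw [h2]
        calc ‖(x n).2‖ ≤ ε * ‖(x n).1‖ := hb
          _ ≤ ε * ‖x n‖ := by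
              apply mul_le_mul_of_nonneg_left _ hε.le
              exact norm_fst_le (x n)
          _ = ε := by rw [hxn.2, mul_one]
      haveI hne : (Filter.atTop ⊓ Filter.principal N4).NeBot := neBot_aux N4 hinf4
      have hev : ∀ᶠ n in (Filter.atTop ⊓ Filter.principal N4),
          ‖x n - ((x n).1, (0:Y)) - 0‖ ≤ ε :=
        Filter.Eventually.filter_mono inf_le_right
          ((Filter.eventually_principal).mpr hpt)
      have := Filter.limsup_le_of_le
        (Filter.isCoboundedUnder_le_of_le _ (fun i => norm_nonneg _)) hev
      linarith
  -- conclude sInf S = 0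
  show sInf S = 0
  have hbdd : BddBelow S := ⟨0, fun x hx => hx.1⟩
  apply le_antisymm
  · by_contra h
    push_neg at h
    have h1 : sInf S ≤ sInf S / 2 := csInf_le hbdd (hmem _ (by linarith))
    linarith
  · exact le_csInf ⟨1, hmem 1 one_pos⟩ (fun x hx => hx.1)
end
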